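/- Let (Δ_n) be a nonincreasing sequence of nonnegative reals and suppose that for constants λ > 0, ζ ≥ 1, R ≥ 0 one has 2λ·(ζ(Δ_n − Δ_{n+1}) − Δ_{n+1}) ≥ r_{n+1}² − r_n² for all n, where r_n ≥ 0 and r_0 = R, r_n ≤ R. Then for all k ≥ 1: Δ_k ≤ (R² + 2λζΔ_0)/(2λ(ζ + k)). -/
import Mathlib

/-- Abstract telescoping argument recovering the Riemannian gradient descent
rate (Section 5): if `Δ` is nonincreasing, nonnegative, and
`2λ(ζ(Δ_n − Δ_{n+1}) − Δ_{n+1}) ≥ r_{n+1}² − r_n²` with `r_0 = R`, `r_n ≤ R`,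
then `Δ_k ≤ (R² + 2λζΔ_0)/(2λ(ζ + k))` for all `k ≥ 1`. -/
theorem stmt16 (Δ r : ℕ → ℝ) (lam ζ R : ℝ)
    (hlam : 0 < lam) (hζ : 1 ≤ ζ) (hR : 0 ≤ R)
    (hΔnonneg : ∀ n, 0 ≤ Δ n) (hΔmono : ∀ n, Δ (n + 1) ≤ Δ n)
    (hrnonneg : ∀ n, 0 ≤ r n) (hr0 : r 0 = R) (hrR : ∀ n, r n ≤ R)
    (hrec : ∀ n, 2 * lam * (ζ * (Δ n - Δ (n + 1)) - Δ (n + 1)) ≥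
      (r (n + 1)) ^ 2 - (r n) ^ 2) :
    ∀ k : ℕ, 1 ≤ k →
      Δ k ≤ (R ^ 2 + 2 * lam * ζ * Δ 0) / (2 * lam * (ζ + k)) := by
  have hmono : ∀ m n : ℕ, m ≤ n → Δ n ≤ Δ m := by
    intro m n h
    induction n with
    | zero => simp_all
    | succ n ih =>
      rcases Nat.lt_or_ge m (n+1) with h'|h'
      · exact le_trans (hΔmono n) (ih (Nat.lt_succ_iff.mp h'))
      · have : m = n+1 := le_antisymm h h'
        simp [this]
  have key : ∀ k : ℕ,
      r k ^ 2 - R ^ 2 ≤ 2 * lam * (ζ * Δ 0 - ζ * Δ k - ∑ i ∈ Finset.range k, Δ (i+1)) := by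
    intro k
    induction k with
    | zero => simp [hr0]
    | succ k ih =>
      have h1 := hrec k
      rw [Finset.sum_range_succ]
      nlinarith [ih, h1]
  intro k hk
  have hsum : (k : ℝ) * Δ k ≤ ∑ i ∈ Finset.range k, Δ (i+1) := by
    calc (k:ℝ) * Δ k = ∑ i ∈ Finset.range k, Δ k := by
          rw [Finset.sum_const, Finset.card_range]; ring
    _ ≤ _ := Finset.sum_le_sum (fun i hi => hmono (i+1) k (Finset.mem_range.mp hi))
  have hpos : 0 < 2 * lam * (ζ + k) := by
    have : (0:ℝ) ≤ k := Nat.cast_nonneg k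
    nlinarith
  rw [le_div_iff₀ hpos]
  nlinarith [key k, hsum, hrnonneg k, sq_nonneg (r k), hΔnonneg k]
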